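/- Let T > 0 and let (Z_t, F_t, P), t ∈ [0,T], be a right-continuous adapted process with Z_T ≥ 0 integrable, satisfying E(Z_T | F_t) ≥ a Z_t a.s. for all 0 ≤ t < T, where a > 0. Then for every α > 0, P(sup_{0≤s≤T} Z_s ≥ α) ≤ (1/(α·min(a,1)))·E[Z_T · 1{sup_{0≤s≤T} Z_s ≥ α}]. -/

import Mathlib

open MeasureTheory Filter Set Topology

section DoobAux

variable {Ω : Type*} {m0 : MeasurableSpace Ω} {μ : Measure Ω} [IsProbabilityMeasure μ]
  {T : ℝ} {ℱ : Filtration ℝ m0} {Z : ℝ → Ω → ℝ} {a : ℝ}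

/-- One block of the stopping-time decomposition. -/
lemma doob_block (hint : Integrable (Z T) μ) (ha : 0 < a)
    (hcond : ∀ t, 0 ≤ t → t < T → (fun ω => a * Z t ω) ≤ᵐ[μ] μ[Z T | ℱ t])
    {β : ℝ} (hβ : 0 < β) {t0 : ℝ} (ht0 : t0 ∈ Icc 0 T)
    {C : Set Ω} (hC : MeasurableSet[ℱ t0] C) (hCsub : C ⊆ {ω | β < Z t0 ω}) :
    min a 1 * β * (μ C).toReal ≤ ∫ ω in C, Z T ω ∂μ := by
  have hCm0 : MeasurableSet C := ℱ.le t0 _ hC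
  rcases eq_or_lt_of_le ht0.2 with rfl | hlt
  · have h1 : β * (μ C).toReal ≤ ∫ ω in C, Z t0 ω ∂μ :=
      setIntegral_ge_of_const_le_real hCm0 (measure_ne_top μ C)
        (fun ω hω => (hCsub hω).le) hint.integrableOn
    have h2 : min a 1 * β ≤ β := by
      calc min a 1 * β ≤ 1 * β := mul_le_mul_of_nonneg_right (min_le_right a 1) hβ.le
      _ = β := one_mul β
    calc min a 1 * β * (μ C).toReal ≤ β * (μ C).toReal :=
          mul_le_mul_of_nonneg_right h2 ENNReal.toReal_nonneg
      _ ≤ ∫ ω in C, Z t0 ω ∂μ := h1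
  · have heq : ∫ ω in C, (μ[Z T|ℱ t0]) ω ∂μ = ∫ ω in C, Z T ω ∂μ :=
      setIntegral_condExp (ℱ.le t0) hint hC
    have hae : (fun _ : Ω => a * β) ≤ᵐ[μ.restrict C] μ[Z T|ℱ t0] := by
      filter_upwards [ae_restrict_of_ae (hcond t0 ht0.1 hlt), ae_restrict_mem hCm0]
        with ω h1ω hωC
      calc a * β ≤ a * Z t0 ω := mul_le_mul_of_nonneg_left (hCsub hωC).le ha.le
        _ ≤ _ := h1ω
    have h1 : a * β * (μ C).toReal ≤ ∫ ω in C, (μ[Z T|ℱ t0]) ω ∂μ := by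
      have := setIntegral_mono_ae_restrict (f := fun _ : Ω => a * β)
        (integrableOn_const (measure_ne_top μ C))
        integrable_condExp.integrableOn hae
      simpa [mul_comm, Measure.real] using this
    have h2 : min a 1 * β ≤ a * β := mul_le_mul_of_nonneg_right (min_le_left a 1) hβ.le
    calc min a 1 * β * (μ C).toReal ≤ a * β * (μ C).toReal :=
          mul_le_mul_of_nonneg_right h2 ENNReal.toReal_nonneg
      _ ≤ ∫ ω in C, (μ[Z T|ℱ t0]) ω ∂μ := h1
      _ = ∫ ω in C, Z T ω ∂μ := heq

lemma doob_finset (hadp : Adapted ℱ Z) (hint : Integrable (Z T) μ) (ha : 0 < a)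
    (hcond : ∀ t, 0 ≤ t → t < T → (fun ω => a * Z t ω) ≤ᵐ[μ] μ[Z T | ℱ t])
    {β : ℝ} (hβ : 0 < β) (F : Finset ℝ) :
    ↑F ⊆ Icc (0:ℝ) T → ∀ B : Set Ω, (∀ t ∈ F, MeasurableSet[ℱ t] B) →
      min a 1 * β * (μ ({ω | ∃ t ∈ F, β < Z t ω} ∩ B)).toReal ≤
        ∫ ω in {ω | ∃ t ∈ F, β < Z t ω} ∩ B, Z T ω ∂μ := by
  classical
  induction F using Finset.strongInduction with
  | _ F ih =>
    intro hF B hB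
    rcases F.eq_empty_or_nonempty with rfl | hne
    · have : {ω : Ω | ∃ t ∈ (∅ : Finset ℝ), β < Z t ω} = ∅ := by simp
      rw [this]
      simp
    · set t0 := F.min' hne with ht0def
      have ht0F : t0 ∈ F := F.min'_mem hne
      have ht0Icc : t0 ∈ Icc (0:ℝ) T := hF ht0F
      set F' := F.erase t0 with hF'def
      have hF'sub : F' ⊂ F := F.erase_ssubset ht0F
      set A : Set Ω := {ω | β < Z t0 ω} with hAdef
      have hAmeas : MeasurableSet[ℱ t0] A :=
        (hadp t0) measurableSet_Ioi
      have hAm0 : MeasurableSet A := ℱ.le t0 _ hAmeas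
      have hBm0 : MeasurableSet B := ℱ.le t0 _ (hB t0 ht0F)
      -- second set
      set S2 : Set Ω := {ω | ∃ t ∈ F', β < Z t ω} ∩ (B \ A) with hS2def
      have hS2m0 : MeasurableSet S2 := by
        have h1 : {ω | ∃ t ∈ F', β < Z t ω} = ⋃ t ∈ F', {ω | β < Z t ω} := by
          ext ω; simp
        have h2 : MeasurableSet {ω | ∃ t ∈ F', β < Z t ω} := by
          rw [h1]
          exact MeasurableSet.biUnion F'.countable_toSet fun t _ =>
            ℱ.le t _ ((hadp t) measurableSet_Ioi)
        exact h2.inter (hBm0.diff hAm0)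
      have hdecomp : {ω | ∃ t ∈ F, β < Z t ω} ∩ B = (A ∩ B) ∪ S2 := by
        ext ω
        simp only [hS2def, hAdef, mem_inter_iff, mem_union, mem_setOf_eq, mem_diff,
          hF'def, Finset.mem_erase]
        constructor
        · rintro ⟨⟨t, htF, htβ⟩, hBω⟩
          by_cases hA : β < Z t0 ω
          · exact Or.inl ⟨hA, hBω⟩
          · refine Or.inr ⟨⟨t, ⟨?_, htF⟩, htβ⟩, hBω, hA⟩
            rintro rfl; exact hA htβ
        · rintro (⟨hA, hBω⟩ | ⟨⟨t, ⟨_, htF⟩, htβ⟩, hBω, _⟩)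
          exacts [⟨⟨t0, ht0F, hA⟩, hBω⟩, ⟨⟨t, htF, htβ⟩, hBω⟩]
      have hdisj : Disjoint (A ∩ B) S2 := by
        refine Set.disjoint_left.2 ?_
        rintro ω ⟨hA, _⟩ ⟨_, _, hA'⟩
        exact hA' hA
      -- block bound for A ∩ B
      have h1 : min a 1 * β * (μ (A ∩ B)).toReal ≤ ∫ ω in A ∩ B, Z T ω ∂μ :=
        doob_block hint ha hcond hβ ht0Icc (hAmeas.inter (hB t0 ht0F))
          (fun ω hω => hω.1)
      -- inductive bound for S2
      have h2 : min a 1 * β * (μ S2).toReal ≤ ∫ ω in S2, Z T ω ∂μ := by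
        refine ih F' hF'sub (fun t ht => hF (F.erase_subset t0 ht)) (B \ A) ?_
        intro t ht
        have htF : t ∈ F := F.erase_subset t0 ht
        exact (hB t htF).diff (ℱ.mono (F.min'_le t htF) _ hAmeas)
      -- combine
      rw [hdecomp, measure_union hdisj hS2m0,
        setIntegral_union hdisj hS2m0 hint.integrableOn hint.integrableOn,
        ENNReal.toReal_add (measure_ne_top μ _) (measure_ne_top μ _), mul_add]
      exact add_le_add h1 h2

lemma doob_countable (hadp : Adapted ℱ Z) (hint : Integrable (Z T) μ) (ha : 0 < a)
    (hcond : ∀ t, 0 ≤ t → t < T → (fun ω => a * Z t ω) ≤ᵐ[μ] μ[Z T | ℱ t])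
    {β : ℝ} (hβ : 0 < β) (e : ℕ → ℝ) (he : ∀ n, e n ∈ Icc (0:ℝ) T) :
    min a 1 * β * (μ (⋃ n, {ω | β < Z (e n) ω})).toReal ≤
      ∫ ω in ⋃ n, {ω | β < Z (e n) ω}, Z T ω ∂μ := by
  classical
  set s : ℕ → Set Ω := fun n => {ω | ∃ t ∈ (Finset.range n).image e, β < Z t ω} with hsdef
  have hsm : ∀ n, MeasurableSet (s n) := by
    intro n
    have h1 : s n = ⋃ t ∈ (Finset.range n).image e, {ω | β < Z t ω} := by ext ω; simp [hsdef]
    rw [h1]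
    exact MeasurableSet.biUnion ((Finset.range n).image e).countable_toSet fun t _ =>
      ℱ.le t _ ((hadp t) measurableSet_Ioi)
  have hmono : Monotone s := by
    intro m n hmn ω ⟨t, htF, htβ⟩
    exact ⟨t, Finset.image_subset_image (Finset.range_subset_range.2 hmn) htF, htβ⟩
  have hunion : ⋃ n, s n = ⋃ n, {ω | β < Z (e n) ω} := by
    ext ω
    simp only [hsdef, mem_iUnion, mem_setOf_eq, Finset.mem_image, Finset.mem_range]
    constructor
    · rintro ⟨n, t, ⟨i, _, rfl⟩, hβi⟩; exact ⟨i, hβi⟩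
    · rintro ⟨i, hβi⟩; exact ⟨i + 1, e i, ⟨i, Nat.lt_succ_self i, rfl⟩, hβi⟩
  have hstep : ∀ n, min a 1 * β * (μ (s n)).toReal ≤ ∫ ω in s n, Z T ω ∂μ := by
    intro n
    have := doob_finset hadp hint ha hcond hβ ((Finset.range n).image e)
      (by intro t ht; simp only [Finset.coe_image, mem_image] at ht
          obtain ⟨i, _, rfl⟩ := ht; exact he i)
      univ (fun t _ => MeasurableSet.univ)
    simpa [hsdef] using this
  have hL : Tendsto (fun n => min a 1 * β * (μ (s n)).toReal) atTop
      (𝓝 (min a 1 * β * (μ (⋃ n, s n)).toReal)) := by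
    exact Tendsto.const_mul _
      ((ENNReal.tendsto_toReal (measure_ne_top μ _)).comp (tendsto_measure_iUnion_atTop hmono))
  have hR : Tendsto (fun n => ∫ ω in s n, Z T ω ∂μ) atTop
      (𝓝 (∫ ω in ⋃ n, s n, Z T ω ∂μ)) :=
    tendsto_setIntegral_of_monotone hsm hmono hint.integrableOn
  have := le_of_tendsto_of_tendsto' hL hR hstep
  rwa [hunion] at this

lemma doob_limit (hadp : Adapted ℱ Z) (hint : Integrable (Z T) μ) (ha : 0 < a)
    (hcond : ∀ t, 0 ≤ t → t < T → (fun ω => a * Z t ω) ≤ᵐ[μ] μ[Z T | ℱ t])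
    {α : ℝ} (hα : 0 < α) (e : ℕ → ℝ) (he : ∀ n, e n ∈ Icc (0:ℝ) T) :
    min a 1 * α *
        (μ (⋂ k : ℕ, ⋃ n, {ω | α - α / (k + 2) < Z (e n) ω})).toReal ≤
      ∫ ω in ⋂ k : ℕ, ⋃ n, {ω | α - α / (k + 2) < Z (e n) ω}, Z T ω ∂μ := by
  set β : ℕ → ℝ := fun k => α - α / (k + 2) with hβdef
  have hk2 : ∀ k : ℕ, (1:ℝ) < (k:ℝ) + 2 := fun k => by
    have := Nat.cast_nonneg (α := ℝ) k; linarith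
  have hβpos : ∀ k, 0 < β k := fun k =>
    sub_pos.2 (div_lt_self hα (hk2 k))
  have hβmono : Monotone β := by
    intro k l hkl
    have h1 : α / ((l:ℝ) + 2) ≤ α / ((k:ℝ) + 2) :=
      div_le_div_of_nonneg_left hα.le (by linarith [hk2 k])
        (by have : (k:ℝ) ≤ l := Nat.cast_le.2 hkl; linarith)
    simpa [hβdef] using sub_le_sub_left h1 α
  have hβtendsto : Tendsto β atTop (𝓝 α) := by
    have h1 : Tendsto (fun k : ℕ => (k:ℝ) + 2) atTop atTop :=
      tendsto_atTop_add_const_right atTop 2 tendsto_natCast_atTop_atTop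
    have h2 : Tendsto (fun k : ℕ => α / ((k:ℝ) + 2)) atTop (𝓝 0) :=
      Tendsto.div_atTop tendsto_const_nhds h1
    simpa using tendsto_const_nhds.sub h2
  set U : ℕ → Set Ω := fun k => ⋃ n, {ω | β k < Z (e n) ω} with hUdef
  have hUm : ∀ k, MeasurableSet (U k) :=
    fun k => MeasurableSet.iUnion fun n =>
      ℱ.le (e n) _ ((hadp (e n)) measurableSet_Ioi)
  have hUanti : Antitone U := by
    intro k l hkl
    exact iUnion_mono fun n ω h => lt_of_le_of_lt (hβmono hkl) h
  have hstep : ∀ k, min a 1 * β k * (μ (U k)).toReal ≤ ∫ ω in U k, Z T ω ∂μ :=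
    fun k => doob_countable hadp hint ha hcond (hβpos k) e he
  have hL : Tendsto (fun k => min a 1 * β k * (μ (U k)).toReal) atTop
      (𝓝 (min a 1 * α * (μ (⋂ k, U k)).toReal)) := by
    have hμ : Tendsto (fun k => (μ (U k)).toReal) atTop (𝓝 ((μ (⋂ k, U k)).toReal)) :=
      (ENNReal.tendsto_toReal (measure_ne_top μ _)).comp
        (tendsto_measure_iInter_atTop (fun k => (hUm k).nullMeasurableSet) hUanti
          ⟨0, measure_ne_top μ _⟩)
    exact (tendsto_const_nhds.mul hβtendsto).mul hμ
  have hR : Tendsto (fun k => ∫ ω in U k, Z T ω ∂μ) atTop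
      (𝓝 (∫ ω in ⋂ k, U k, Z T ω ∂μ)) :=
    tendsto_setIntegral_of_antitone hUm hUanti ⟨0, hint.integrableOn⟩
  exact le_of_tendsto_of_tendsto' hL hR hstep

end DoobAux

/-- **Improved Doob inequality (continuous time).** If `(Z t)_{t ∈ [0,T]}` is adapted and
right-continuous, `Z T ≥ 0` is integrable, and `E(Z T | ℱ t) ≥ a • Z t` a.s. for all
`0 ≤ t < T` with `a > 0`, then for `α > 0`,
`P(sup_{0 ≤ s ≤ T} Z s ≥ α) ≤ (1/(α * min a 1)) * E[Z T ; sup_{0 ≤ s ≤ T} Z s ≥ α]`. -/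
theorem improved_doob_continuous
    {Ω : Type*} {m0 : MeasurableSpace Ω} {μ : Measure Ω} [IsProbabilityMeasure μ]
    {T : ℝ} (hT : 0 < T) {ℱ : Filtration ℝ m0} {Z : ℝ → Ω → ℝ}
    (hadp : Adapted ℱ Z)
    (hrc : ∀ ω, ∀ t : ℝ, ContinuousWithinAt (fun s => Z s ω) (Ici t) t)
    (hpos : 0 ≤ Z T) (hint : Integrable (Z T) μ)
    {a : ℝ} (ha : 0 < a)
    (hcond : ∀ t, 0 ≤ t → t < T → (fun ω => a * Z t ω) ≤ᵐ[μ] μ[Z T | ℱ t])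
    (α : ℝ) (hα : 0 < α) :
    (μ {ω | α ≤ ⨆ s : Icc (0 : ℝ) T, Z s ω}).toReal ≤
      (1 / (α * min a 1)) * ∫ ω in {ω | α ≤ ⨆ s : Icc (0 : ℝ) T, Z s ω}, Z T ω ∂μ := by
  classical
  haveI : Nonempty (Icc (0:ℝ) T) := ⟨⟨0, le_refl 0, hT.le⟩⟩
  -- countable dense-from-the-right set of times
  set D : Set ℝ := insert T (Icc 0 T ∩ range ((↑) : ℚ → ℝ)) with hDdef
  have hDc : D.Countable :=
    ((countable_range _).mono inter_subset_right).insert T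
  have hDsub : D ⊆ Icc (0:ℝ) T := by
    rintro s (rfl | ⟨hs, -⟩)
    exacts [⟨hT.le, le_refl _⟩, hs]
  obtain ⟨e, hDe⟩ := hDc.exists_eq_range ⟨T, mem_insert _ _⟩
  have heIcc : ∀ n, e n ∈ Icc (0:ℝ) T := fun n => hDsub (hDe ▸ mem_range_self n)
  -- right-continuity: values on `[0,T]` are approximated from within `D`
  have hD_approx : ∀ ω, ∀ t ∈ Icc (0:ℝ) T, ∀ c, c < Z t ω → ∃ s ∈ D, c < Z s ω := by
    intro ω t ht c hc
    rcases eq_or_lt_of_le ht.2 with rfl | hlt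
    · exact ⟨t, mem_insert _ _, hc⟩
    · have hmem : (fun s => Z s ω) ⁻¹' (Ioi c) ∈ 𝓝[Ici t] t :=
        hrc ω t (Ioi_mem_nhds hc)
      rw [Metric.mem_nhdsWithin_iff] at hmem
      obtain ⟨δ, hδ, hball⟩ := hmem
      obtain ⟨q, hq1, hq2⟩ :=
        exists_rat_btwn (lt_min (lt_add_of_pos_right t hδ) hlt)
      have hq2' : (q:ℝ) < t + δ := lt_of_lt_of_le hq2 (min_le_left _ _)
      have hqT : (q:ℝ) < T := lt_of_lt_of_le hq2 (min_le_right _ _)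
      have hq0 : (0:ℝ) ≤ q := le_trans ht.1 hq1.le
      have hqD : (q:ℝ) ∈ D :=
        mem_insert_of_mem _ ⟨⟨hq0, hqT.le⟩, ⟨q, rfl⟩⟩
      have hqball : (q:ℝ) ∈ Metric.ball t δ ∩ Ici t := by
        constructor
        · rw [Metric.mem_ball, Real.dist_eq, abs_of_pos (by linarith)]
          linarith
        · exact hq1.le
      exact ⟨q, hqD, hball hqball⟩
  set β : ℕ → ℝ := fun k => α - α / (k + 2) with hβdef
  have hk2 : ∀ k : ℕ, (1:ℝ) < (k:ℝ) + 2 := fun k => by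
    have := Nat.cast_nonneg (α := ℝ) k; linarith
  have hβlt : ∀ k, β k < α := fun k =>
    sub_lt_self α (div_pos hα (by linarith [hk2 k]))
  have hβtendsto : Tendsto β atTop (𝓝 α) := by
    have h1 : Tendsto (fun k : ℕ => (k:ℝ) + 2) atTop atTop :=
      tendsto_atTop_add_const_right atTop 2 tendsto_natCast_atTop_atTop
    have h2 : Tendsto (fun k : ℕ => α / ((k:ℝ) + 2)) atTop (𝓝 0) :=
      Tendsto.div_atTop tendsto_const_nhds h1
    simpa using tendsto_const_nhds.sub h2
  set S : Set Ω := {ω | α ≤ ⨆ s : Icc (0 : ℝ) T, Z s ω} with hSdef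
  set G : Set Ω := ⋂ k : ℕ, ⋃ n, {ω | β k < Z (e n) ω} with hGdef
  -- S ⊆ G
  have hSG : S ⊆ G := by
    intro ω hω
    have hbdd : BddAbove (range fun s : Icc (0:ℝ) T => Z s ω) := by
      by_contra hb
      rw [hSdef, mem_setOf_eq, Real.iSup_of_not_bddAbove hb] at hω
      exact absurd hω (not_le.2 hα)
    refine mem_iInter.2 fun k => ?_
    obtain ⟨y, ⟨⟨s, hsIcc⟩, rfl⟩, hy⟩ :=
      exists_lt_of_lt_csSup (range_nonempty _) (lt_of_lt_of_le (hβlt k) hω)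
    obtain ⟨u, huD, hu⟩ := hD_approx ω s hsIcc (β k) hy
    obtain ⟨n, rfl⟩ := (hDe ▸ huD : u ∈ range e)
    exact mem_iUnion.2 ⟨n, hu⟩
  -- the set where the path is unbounded along `e` is null
  set N : Set Ω := {ω | ¬ BddAbove (range fun n => Z (e n) ω)} with hNdef
  have hNnull : μ N = 0 := by
    set C := ∫ ω, Z T ω ∂μ with hCdef
    have hma1 : 0 < min a 1 := lt_min ha one_pos
    have hbound : ∀ m : ℕ, (μ N).toReal ≤ C / (min a 1 * ((m:ℝ) + 1)) := by
      intro m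
      have hm1 : (0:ℝ) < (m:ℝ) + 1 := by positivity
      have hsub : N ⊆ ⋃ n, {ω | ((m:ℝ) + 1) < Z (e n) ω} := by
        intro ω hω
        by_contra hcon
        simp only [mem_iUnion, mem_setOf_eq, not_exists, not_lt] at hcon
        exact hω ⟨(m:ℝ) + 1, by rintro _ ⟨n, rfl⟩; exact hcon n⟩
      have h1 := doob_countable hadp hint ha hcond hm1 e heIcc
      have h2 : ∫ ω in ⋃ n, {ω | ((m:ℝ) + 1) < Z (e n) ω}, Z T ω ∂μ ≤ C :=
        setIntegral_le_integral hint (Eventually.of_forall hpos)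
      have h3 : (μ N).toReal ≤ (μ (⋃ n, {ω | ((m:ℝ) + 1) < Z (e n) ω})).toReal :=
        ENNReal.toReal_mono (measure_ne_top μ _) (measure_mono hsub)
      rw [le_div_iff₀ (by positivity), mul_comm]
      have h4 := mul_le_mul_of_nonneg_left h3 (mul_pos hma1 hm1).le
      linarith
    have htend : Tendsto (fun m : ℕ => C / (min a 1 * ((m:ℝ) + 1))) atTop (𝓝 0) := by
      refine Tendsto.div_atTop tendsto_const_nhds ?_
      exact Tendsto.const_mul_atTop hma1
        (tendsto_atTop_add_const_right atTop 1 tendsto_natCast_atTop_atTop)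
    have h0 : (μ N).toReal ≤ 0 := ge_of_tendsto' htend hbound
    have := le_antisymm h0 ENNReal.toReal_nonneg
    rcases (ENNReal.toReal_eq_zero_iff _).1 this with h | h
    · exact h
    · exact absurd h (measure_ne_top μ N)
  -- G \ S ⊆ N
  have hGS : G \ S ⊆ N := by
    rintro ω ⟨hωG, hωS⟩
    intro hbddD
    apply hωS
    obtain ⟨M, hM⟩ := hbddD
    have hMub : ∀ t ∈ Icc (0:ℝ) T, Z t ω ≤ M := by
      intro t ht
      by_contra hcon
      push_neg at hcon
      obtain ⟨u, huD, hu⟩ := hD_approx ω t ht M hcon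
      obtain ⟨n, rfl⟩ := (hDe ▸ huD : u ∈ range e)
      exact absurd (hM ⟨n, rfl⟩) (not_le.2 hu)
    have hbdd : BddAbove (range fun s : Icc (0:ℝ) T => Z s ω) :=
      ⟨M, by rintro _ ⟨s, rfl⟩; exact hMub s s.2⟩
    have hk : ∀ k, β k ≤ ⨆ s : Icc (0 : ℝ) T, Z s ω := by
      intro k
      obtain ⟨n, hn⟩ := mem_iUnion.1 (mem_iInter.1 hωG k)
      exact le_trans hn.le (le_csSup hbdd ⟨⟨e n, heIcc n⟩, rfl⟩)
    exact le_of_tendsto' hβtendsto hk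
  -- S and G agree almost everywhere
  have haeSG : S =ᵐ[μ] G := by
    rw [MeasureTheory.ae_eq_set]
    exact ⟨by rw [diff_eq_empty.2 hSG]; exact measure_empty,
      measure_mono_null hGS hNnull⟩
  have key : min a 1 * α * (μ G).toReal ≤ ∫ ω in G, Z T ω ∂μ :=
    doob_limit hadp hint ha hcond hα e heIcc
  have hμeq : μ S = μ G := measure_congr haeSG
  have hieq : ∫ ω in S, Z T ω ∂μ = ∫ ω in G, Z T ω ∂μ :=
    setIntegral_congr_set haeSG
  have hc : (0:ℝ) < α * min a 1 := mul_pos hα (lt_min ha one_pos)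
  rw [hμeq, hieq, one_div_mul_eq_div, le_div_iff₀ hc]
  calc (μ G).toReal * (α * min a 1) = min a 1 * α * (μ G).toReal := by ring
    _ ≤ ∫ ω in G, Z T ω ∂μ := key
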